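/- Let E ≥ 0 and λ ∈ ℝ with λ² ≤ 2E, and let s ∈ {+1, −1}. Define γ : ℝ³ → ℝ³ by γ(x, y, z) = (λ/√(1+y²), s·√(2E − λ²), λy/√(1+y²)). Then: (i) ½(γ₁² + γ₂² + γ₃²)(x, y, z) = E for all (x, y, z), i.e. H ∘ γ = E for H(q, p) = ½|p|²; (ii) γ₃ = y·γ₁ everywhere, so the image of γ lies in the constraint codistribution M = span{dx + y dz, dy}; and (iii) (1 + y²)·(d/dy)[λ/√(1+y²)] + y·(λ/√(1+y²)) = 0 for all y, which is the condition that dγ vanishes on pairs of vectors in the constraint distribution D = span{∂/∂x + y ∂/∂z, ∂/∂y}. Hence γ is a solution of the nonholonomic Hamilton–Jacobi equation for the nonholonomic particle. -/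

import Mathlib

/-- The nonholonomic particle: the 1-form
`γ = (λ/√(1+y²)) dx ± √(2E − λ²) dy + (λy/√(1+y²)) dz` solves the nonholonomic
Hamilton–Jacobi problem for `H = ½|p|²` with constraint distribution
`D = span{∂/∂x + y ∂/∂z, ∂/∂y}`: it has constant energy `E`, its image lies in the
codistribution `M = span{dx + y dz, dy}` (i.e. `γ₃ = y γ₁`), and the closedness
condition `(1+y²) γₓ'(y) + y γₓ(y) = 0` on `D × D` holds. -/
theorem nonholonomic_particle_hamilton_jacobi_solution
    (E l s : ℝ) (hE : 0 ≤ E) (hl : l ^ 2 ≤ 2 * E) (hs : s = 1 ∨ s = -1)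
    (γ : (Fin 3 → ℝ) → (Fin 3 → ℝ))
    (hγdef : ∀ q : Fin 3 → ℝ,
      γ q = ![l / Real.sqrt (1 + q 1 ^ 2),
              s * Real.sqrt (2 * E - l ^ 2),
              l * q 1 / Real.sqrt (1 + q 1 ^ 2)]) :
    (∀ q : Fin 3 → ℝ,
      (1 / 2) * ((γ q 0) ^ 2 + (γ q 1) ^ 2 + (γ q 2) ^ 2) = E) ∧
    (∀ q : Fin 3 → ℝ, γ q 2 = q 1 * γ q 0) ∧
    (∀ y : ℝ,
      (1 + y ^ 2) * deriv (fun y : ℝ => l / Real.sqrt (1 + y ^ 2)) y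
        + y * (l / Real.sqrt (1 + y ^ 2)) = 0) := by
  have hpos : ∀ y : ℝ, (0:ℝ) < 1 + y ^ 2 := fun y => by positivity
  have hsq : ∀ y : ℝ, Real.sqrt (1 + y ^ 2) ^ 2 = 1 + y ^ 2 := fun y =>
    Real.sq_sqrt (hpos y).le
  have hsqpos : ∀ y : ℝ, (0:ℝ) < Real.sqrt (1 + y ^ 2) := fun y =>
    Real.sqrt_pos.mpr (hpos y)
  refine ⟨?_, ?_, ?_⟩
  · intro q
    rw [hγdef q]
    simp only [Matrix.cons_val_zero, Matrix.cons_val_one, Matrix.head_cons,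
      Matrix.cons_val_two, Matrix.tail_cons]
    have h1 := hsq (q 1)
    have h2 : Real.sqrt (2 * E - l ^ 2) ^ 2 = 2 * E - l ^ 2 :=
      Real.sq_sqrt (by linarith)
    have hs2 : s ^ 2 = 1 := by rcases hs with h | h <;> rw [h] <;> ring
    have hne : Real.sqrt (1 + q 1 ^ 2) ≠ 0 := (hsqpos (q 1)).ne'
    field_simp
    rw [hs2, mul_one, h2, h1]
    ring
  · intro q
    rw [hγdef q]
    simp only [Matrix.cons_val_zero, Matrix.cons_val_one, Matrix.head_cons,
      Matrix.cons_val_two, Matrix.tail_cons]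
    ring
  · intro y
    have hne : Real.sqrt (1 + y ^ 2) ≠ 0 := (hsqpos y).ne'
    have hg : HasDerivAt (fun y : ℝ => Real.sqrt (1 + y ^ 2))
        (1 / (2 * Real.sqrt (1 + y ^ 2)) * (2 * y)) y := by
      have h1 : HasDerivAt (fun y : ℝ => 1 + y ^ 2) (2 * y) y := by
        simpa using ((hasDerivAt_pow 2 y).const_add 1)
      exact (Real.hasDerivAt_sqrt (hpos y).ne').comp y h1
    have hd : HasDerivAt (fun y : ℝ => l / Real.sqrt (1 + y ^ 2))
        ((0 * Real.sqrt (1 + y ^ 2) - l * (1 / (2 * Real.sqrt (1 + y ^ 2)) * (2 * y))) /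
          Real.sqrt (1 + y ^ 2) ^ 2) y :=
      (hasDerivAt_const y l).div hg hne
    rw [hd.deriv]
    have h1 := hsq y
    field_simp
    rw [h1]; ring
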